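/- Let ω ∈ ℱ¹(ℙⁿ,e) be such that J(ω) is a radical ideal of S. Then (J(ω) : I(ω)) = (J(ω) : K(ω)) = L(ω). In particular, the annihilator of the S-module I(ω)/J(ω) equals L(ω), so the minimal primes of the support of I(ω)/J(ω) coincide with the minimal primes over L(ω) (the minimal components of S/L(ω)). -/

import Mathlib

open MvPolynomial

noncomputable section

abbrev PolyS (n : ℕ) := MvPolynomial (Fin (n+1)) ℂ

/-- The coefficient of `dω` at `dx_i ∧ dx_j`, where `ω` is the 1-form `Σ ω i dx_i`. -/
def dcoeff {n : ℕ} (ω : Fin (n+1) → PolyS n) (i j : Fin (n+1)) : PolyS n :=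
  pderiv i (ω j) - pderiv j (ω i)

/-- Integrability `ω ∧ dω = 0`, written in coordinates. -/
def Integrable {n : ℕ} (ω : Fin (n+1) → PolyS n) : Prop :=
  ∀ i j k, ω i * dcoeff ω j k - ω j * dcoeff ω i k + ω k * dcoeff ω i j = 0

/-- The singular ideal `J(ω)`, generated by the coefficients of `ω`. -/
def Jideal {n : ℕ} (ω : Fin (n+1) → PolyS n) : Ideal (PolyS n) :=
  Ideal.span (Set.range ω)

/-- The ideal `𝒞(dω)` of coefficients of `dω`. -/
def Cdiff {n : ℕ} (ω : Fin (n+1) → PolyS n) : Ideal (PolyS n) :=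
  Ideal.span {g | ∃ i j, g = dcoeff ω i j}

/-- The unfoldings ideal `I(ω) = {h : h·dω = ω ∧ η for some 1-form η}`. -/
def Iideal {n : ℕ} (ω : Fin (n+1) → PolyS n) : Ideal (PolyS n) where
  carrier := {h | ∃ η : Fin (n+1) → PolyS n,
    ∀ i j, h * dcoeff ω i j = ω i * η j - ω j * η i}
  add_mem' := by
    rintro a b ⟨η, hη⟩ ⟨ξ, hξ⟩
    exact ⟨η + ξ, fun i j => by
      simp only [Pi.add_apply]
      linear_combination hη i j + hξ i j⟩
  zero_mem' := ⟨0, fun i j => by simp⟩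
  smul_mem' := by
    rintro c a ⟨η, hη⟩
    exact ⟨c • η, fun i j => by
      simp only [smul_eq_mul, Pi.smul_apply]
      linear_combination c * hη i j⟩

/-- The Kupka ideal `K(ω) = (J(ω) : 𝒞(dω))`. -/
def Kideal {n : ℕ} (ω : Fin (n+1) → PolyS n) : Ideal (PolyS n) :=
  (Jideal ω).colon (Cdiff ω)

/-- The non-Kupka ideal `L(ω) = (J(ω) : K(ω)^∞)`. -/
def Lideal {n : ℕ} (ω : Fin (n+1) → PolyS n) : Ideal (PolyS n) :=
  ⨆ d : ℕ, (Jideal ω).colon ((Kideal ω) ^ (d+1) : Ideal (PolyS n))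

/-- The irrelevant ideal `(x_0, …, x_n)`. -/
def irrelevant (n : ℕ) : Ideal (PolyS n) := Ideal.span (Set.range X)

/-- `height I ≥ k` : every prime containing `I` has height at least `k`. -/
def heightGE {n : ℕ} (I : Ideal (PolyS n)) (k : ℕ) : Prop :=
  ∀ p : PrimeSpectrum (PolyS n), I ≤ p.asIdeal → (k : ℕ∞) ≤ Order.height p

/-- `ω ∈ ℱ¹(ℙⁿ, e)` : a foliation one-form of degree `e` on `ℙⁿ`. -/
def IsFoliation (n e : ℕ) (ω : Fin (n+1) → PolyS n) : Prop :=
  ω ≠ 0 ∧ 2 ≤ e ∧ (∀ i, (ω i).IsHomogeneous (e-1)) ∧ Integrable ω ∧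
  (∑ i, X i * ω i = 0) ∧ heightGE (Jideal ω) 2

/-- A homogeneous ideal: stable under taking homogeneous components. -/
def IsHomogIdeal {n : ℕ} (p : Ideal (PolyS n)) : Prop :=
  ∀ h ∈ p, ∀ d : ℕ, homogeneousComponent d h ∈ p

/-- A relevant prime: a homogeneous prime different from the irrelevant ideal. -/
def IsRelevantPrime {n : ℕ} (p : Ideal (PolyS n)) : Prop :=
  p.IsPrime ∧ IsHomogIdeal p ∧ p ≠ irrelevant n

/-- A relevant prime `p` is a division point of `ω` iff `I(ω) ⊄ p`. -/
def DivisionPoint {n : ℕ} (ω : Fin (n+1) → PolyS n) (p : Ideal (PolyS n)) : Prop :=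
  ¬ (Iideal ω ≤ p)

/-- The class `𝒰`. -/
def InU {n : ℕ} (ω : Fin (n+1) → PolyS n) : Prop :=
  ∀ p : Ideal (PolyS n), IsRelevantPrime p → ¬ (Kideal ω ≤ p) → DivisionPoint ω p


/-! ### Minimal prime saturation -/

section MinPrime
variable {R : Type*} [CommRing R]

theorem minimal_sat {J q : Ideal R} (hq : q ∈ J.minimalPrimes) (hrad : J.IsRadical)
    {z : R} (hz : z ∈ q) : ∃ s, s ∉ q ∧ s * z ∈ J := by
  obtain ⟨⟨hqp, hJq⟩, hqmin⟩ := hq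
  by_contra hcon
  push_neg at hcon
  have hpow : ∀ s, s ∉ q → ∀ n, s * z ^ n ∉ J := by
    intro s hs n hmem
    have h2 : (s * z) ^ (n + 1) ∈ J := by
      have he : (s * z) ^ (n + 1) = (s ^ n * z) * (s * z ^ n) := by ring
      rw [he]; exact J.mul_mem_left _ hmem
    exact hcon s hs (hrad (Ideal.mem_radical_iff.mpr ⟨n + 1, h2⟩))
  have h1q : (1 : R) ∉ q := (Ideal.ne_top_iff_one q).mp hqp.ne_top
  let M : Submonoid R :=
    { carrier := {r | ∃ s, s ∉ q ∧ ∃ n : ℕ, r = s * z ^ n}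
      one_mem' := ⟨1, h1q, 0, by ring⟩
      mul_mem' := by
        rintro a b ⟨s, hs, n, rfl⟩ ⟨s', hs', n', rfl⟩
        refine ⟨s * s', fun hm => ?_, n + n', by ring⟩
        rcases hqp.mem_or_mem hm with h | h
        exacts [hs h, hs' h] }
  have hdisj : Disjoint (J : Set R) (M : Set R) := by
    rw [Set.disjoint_left]
    rintro r hr ⟨s, hs, n, rfl⟩
    exact hpow s hs n hr
  obtain ⟨p, hp, hJp, hpM⟩ := Ideal.exists_le_prime_disjoint J M hdisj
  have hpq : p ≤ q := by
    intro a ha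
    by_contra haq
    exact Set.disjoint_left.mp hpM ha ⟨a, haq, 0, by ring⟩
  have hqlep : q ≤ p := hqmin ⟨hp, hJp⟩ hpq
  exact Set.disjoint_left.mp hpM (hqlep hz) ⟨1, h1q, 1, by ring⟩

end MinPrime

/-! ### Towers of primes adapted to a prime ideal -/

structure Tower {R : Type*} [CommRing R] (q : Ideal R) where
  m : ℕ
  F : ℕ → R
  p : ℕ → Ideal R
  p_prime : ∀ k ≤ m, (p k).IsPrime
  p_le : ∀ k ≤ m, p k ≤ q
  p_zero : p 0 = ⊥
  p_last : p m = q
  p_mono : ∀ k < m, p k ≤ p (k + 1)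
  F_mem : ∀ k < m, F (k + 1) ∈ p (k + 1)
  F_not_mem : ∀ k < m, F (k + 1) ∉ p k
  sat : ∀ k ≤ m, ∀ z ∈ p k, ∃ s, s ∉ q ∧ s * z ∈ Ideal.span (F '' Set.Icc 1 k)

namespace Tower

/-- transport a tower along a ring isomorphism -/
def mapEquiv {R S : Type*} [CommRing R] [CommRing S] (e : R ≃+* S) {q : Ideal R}
    (t : Tower q) : Tower (q.map (e : R →+* S)) := by
  have memmap : ∀ (I : Ideal R) (x : S), x ∈ I.map (e : R →+* S) ↔ e.symm x ∈ I := by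
    intro I x
    rw [I.map_comap_of_equiv e]; rfl
  refine
  { m := t.m
    F := fun k => e (t.F k)
    p := fun k => (t.p k).map (e : R →+* S)
    p_prime := fun k hk => by
      show (Ideal.map (e : R →+* S) (t.p k)).IsPrime
      rw [(t.p k).map_comap_of_equiv e]
      exact (t.p_prime k hk).comap _
    p_le := fun k hk => Ideal.map_mono (t.p_le k hk)
    p_zero := by simpa using congrArg (Ideal.map (e : R →+* S)) t.p_zero
    p_last := congrArg (Ideal.map (e : R →+* S)) t.p_last
    p_mono := fun k hk => Ideal.map_mono (t.p_mono k hk)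
    F_mem := fun k hk => Ideal.mem_map_of_mem _ (t.F_mem k hk)
    F_not_mem := fun k hk h => t.F_not_mem k hk (by simpa [memmap] using h)
    sat := ?_ }
  intro k hk z hz
  rw [memmap] at hz
  obtain ⟨s, hs, hmem⟩ := t.sat k hk _ hz
  refine ⟨e s, fun hc => hs (by simpa using (memmap q (e s)).mp hc), ?_⟩
  have himg : (fun k => e (t.F k)) '' Set.Icc 1 k = (e : R →+* S) '' (t.F '' Set.Icc 1 k) := by
    rw [← Set.image_comp]; rfl
  have hspan : Ideal.span ((fun k => e (t.F k)) '' Set.Icc 1 k)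
      = (Ideal.span (t.F '' Set.Icc 1 k)).map (e : R →+* S) := by
    rw [Ideal.map_span, himg]
  rw [hspan]
  have : e s * z = e (s * e.symm z) := by
    rw [map_mul]; simp
  rw [this]
  exact Ideal.mem_map_of_mem _ hmem

end Tower

theorem C_mul_mem_span {W : Type*} [CommRing W] (A : Set W) (s : W) (z : Polynomial W)
    (h : ∀ i, s * z.coeff i ∈ Ideal.span A) :
    Polynomial.C s * z ∈ Ideal.span ((Polynomial.C : W →+* Polynomial W) '' A) := by
  have hz : Polynomial.C s * z
      = ∑ i ∈ z.support, Polynomial.C (s * z.coeff i) * Polynomial.X ^ i := by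
    conv_lhs => rw [z.as_sum_support]
    rw [Finset.mul_sum]
    refine Finset.sum_congr rfl fun i _ => ?_
    rw [Polynomial.C_mul_monomial, ← Polynomial.C_mul_X_pow_eq_monomial]
  rw [hz]
  refine Ideal.sum_mem _ fun i _ => Ideal.mul_mem_right _ _ ?_
  have h2 : Ideal.map (Polynomial.C : W →+* Polynomial W) (Ideal.span A)
      = Ideal.span ((Polynomial.C : W →+* Polynomial W) '' A) := Ideal.map_span _ _
  rw [← h2]
  exact Ideal.mem_map_of_mem _ (h i)

theorem sat_push {W : Type*} [CommRing W] {q' p' : Ideal W} (hq' : q'.IsPrime) (A : Set W)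
    (sat : ∀ z ∈ p', ∃ s, s ∉ q' ∧ s * z ∈ Ideal.span A) (z : Polynomial W)
    (hz : z ∈ p'.map (Polynomial.C : W →+* Polynomial W)) :
    ∃ s, s ∉ q' ∧ Polynomial.C s * z ∈ Ideal.span ((Polynomial.C : W →+* Polynomial W) '' A) := by
  rw [Ideal.mem_map_C_iff] at hz
  choose sf hsf hsfm using fun i => sat (z.coeff i) (hz i)
  refine ⟨∏ i ∈ z.support, sf i, ?_, ?_⟩
  · intro hmem
    obtain ⟨i, _, hi⟩ := (hq'.prod_mem_iff).mp hmem
    exact hsf i hi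
  · refine C_mul_mem_span A _ z fun i => ?_
    by_cases hi : i ∈ z.support
    · have : (∏ j ∈ z.support, sf j) * z.coeff i
          = (∏ j ∈ z.support.erase i, sf j) * (sf i * z.coeff i) := by
        rw [← mul_assoc]
        congr 1
        exact (Finset.prod_erase_mul z.support sf hi).symm
      rw [this]
      exact Ideal.mul_mem_left _ _ (hsfm i)
    · have : z.coeff i = 0 := Polynomial.notMem_support_iff.mp hi
      rw [this, mul_zero]
      exact (Ideal.span A).zero_mem

/-- Pseudo-division by a polynomial with unit-free leading coefficient, over a domain. -/
theorem pseudo_div {W : Type*} [CommRing W] [IsDomain W] (G : Polynomial W)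
    (hG : 0 < G.natDegree) (z : Polynomial W) :
    ∃ (M : ℕ) (c r : Polynomial W),
      (Polynomial.C G.leadingCoeff) ^ M * z = c * G + r ∧ r.natDegree < G.natDegree := by
  have hGne : G ≠ 0 := fun h => by simp [h] at hG
  have hD : G.leadingCoeff ≠ 0 := Polynomial.leadingCoeff_ne_zero.mpr hGne
  suffices h : ∀ d (z : Polynomial W), z.natDegree ≤ d → ∃ (M : ℕ) (c r : Polynomial W),
      (Polynomial.C G.leadingCoeff) ^ M * z = c * G + r ∧ r.natDegree < G.natDegree by
    exact h z.natDegree z le_rfl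
  intro d
  induction d with
  | zero => exact fun z hz0 => ⟨0, 0, z, by ring, lt_of_le_of_lt hz0 hG⟩
  | succ d IH =>
    intro z hzd
    by_cases hlt : z.natDegree < G.natDegree
    · exact ⟨0, 0, z, by ring, hlt⟩
    push_neg at hlt
    have hzne : z ≠ 0 := by
      intro h; rw [h] at hlt; simp at hlt; omega
    set e := z.natDegree - G.natDegree with he
    set z' := Polynomial.C G.leadingCoeff * z -
      Polynomial.C z.leadingCoeff * Polynomial.X ^ e * G with hz'
    have hdeg1 : (Polynomial.C G.leadingCoeff * z).degree = z.degree := by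
      rw [Polynomial.degree_C_mul hD]
    have hdeg2 : (Polynomial.C z.leadingCoeff * Polynomial.X ^ e * G).degree = z.degree := by
      rw [Polynomial.degree_mul, Polynomial.degree_mul, Polynomial.degree_C
        (Polynomial.leadingCoeff_ne_zero.mpr hzne), Polynomial.degree_X_pow]
      rw [Polynomial.degree_eq_natDegree hzne, Polynomial.degree_eq_natDegree hGne]
      rw [zero_add]
      norm_cast
      omega
    have hlc : (Polynomial.C G.leadingCoeff * z).leadingCoeff
        = (Polynomial.C z.leadingCoeff * Polynomial.X ^ e * G).leadingCoeff := by
      rw [Polynomial.leadingCoeff_mul, Polynomial.leadingCoeff_mul, Polynomial.leadingCoeff_mul]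
      simp [Polynomial.leadingCoeff_X_pow, mul_comm]
    have hne1 : Polynomial.C G.leadingCoeff * z ≠ 0 := mul_ne_zero (by simpa using hD) hzne
    have hdrop : z'.degree < z.degree := by
      rw [hz']
      calc (Polynomial.C G.leadingCoeff * z -
            Polynomial.C z.leadingCoeff * Polynomial.X ^ e * G).degree
          < (Polynomial.C G.leadingCoeff * z).degree :=
            Polynomial.degree_sub_lt (by rw [hdeg1, hdeg2]) hne1 hlc
        _ = z.degree := hdeg1
    by_cases hz'0 : z' = 0
    · refine ⟨1, Polynomial.C z.leadingCoeff * Polynomial.X ^ e, 0, ?_, by simpa using hG⟩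
      have : Polynomial.C G.leadingCoeff * z = Polynomial.C z.leadingCoeff
          * Polynomial.X ^ e * G := by
        have := sub_eq_zero.mp (hz' ▸ hz'0)
        linear_combination this
      rw [pow_one]; rw [this]; ring
    · have hdn : z'.natDegree < z.natDegree := by
        have := Polynomial.natDegree_lt_natDegree hz'0 hdrop
        exact this
      obtain ⟨M, c, r, heq, hr⟩ := IH z' (by omega)
      refine ⟨M + 1, c + (Polynomial.C G.leadingCoeff) ^ M *
        (Polynomial.C z.leadingCoeff * Polynomial.X ^ e), r, ?_, hr⟩
      have : (Polynomial.C G.leadingCoeff) ^ M * z' = c * G + r := heq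
      rw [hz'] at this
      ring_nf
      ring_nf at this
      linear_combination this

attribute [local instance] Classical.propDecidable

theorem tower_polynomial {W : Type*} [CommRing W] [IsDomain W] (Q : Ideal (Polynomial W))
    (hQ : Q.IsPrime) (t : Tower (Q.comap (Polynomial.C : W →+* Polynomial W))) :
    Nonempty (Tower Q) := by
  set CC := (Polynomial.C : W →+* Polynomial W) with hCC
  set Q' := Q.comap CC with hQ'def
  have hQ'p : Q'.IsPrime := hQ.comap CC
  have hmaple : Q'.map CC ≤ Q := Ideal.map_le_iff_le_comap.mpr le_rfl
  have hpkle : ∀ k ≤ t.m, (t.p k).map CC ≤ Q :=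
    fun k hk => le_trans (Ideal.map_mono (t.p_le k hk)) hmaple
  have hCmem : ∀ w : W, CC w ∈ Q ↔ w ∈ Q' := fun w => Iff.rfl
  have hsatk : ∀ k ≤ t.m, ∀ z ∈ (t.p k).map CC, ∃ s, s ∉ Q ∧
      s * z ∈ Ideal.span ((fun j => CC (t.F j)) '' Set.Icc 1 k) := by
    intro k hk z hz
    obtain ⟨s, hs, hmem⟩ := sat_push hQ'p (t.F '' Set.Icc 1 k) (t.sat k hk) z hz
    refine ⟨CC s, fun hc => hs ((hCmem s).mp hc), ?_⟩
    have himg : (fun j => CC (t.F j)) '' Set.Icc 1 k = CC '' (t.F '' Set.Icc 1 k) := by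
      rw [← Set.image_comp]; rfl
    rw [himg]
    exact hmem
  have hFnot : ∀ k ≤ t.m, ∀ f : W, f ∉ t.p k → CC f ∉ (t.p k).map CC := by
    intro k _ f hf hmem
    rw [Ideal.mem_map_C_iff] at hmem
    have := hmem 0
    rw [Polynomial.coeff_C_zero] at this
    exact hf this
  by_cases hcase : Q ≤ Q'.map CC
  · -- transcendental case
    refine ⟨{
      m := t.m
      F := fun k => CC (t.F k)
      p := fun k => (t.p k).map CC
      p_prime := fun k hk => (Ideal.isPrime_map_C_iff_isPrime _).mpr (t.p_prime k hk)
      p_le := hpkle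
      p_zero := by show (t.p 0).map CC = ⊥; rw [t.p_zero, Ideal.map_bot]
      p_last := le_antisymm (hpkle t.m le_rfl) (by show Q ≤ (t.p t.m).map CC; rw [t.p_last]; exact hcase)
      p_mono := fun k hk => Ideal.map_mono (t.p_mono k hk)
      F_mem := fun k hk => Ideal.mem_map_of_mem _ (t.F_mem k hk)
      F_not_mem := fun k hk => hFnot k (le_of_lt hk) _ (t.F_not_mem k hk)
      sat := hsatk }⟩
  · -- algebraic case
    have hex : ∃ d : ℕ, ∃ G, (G ∈ Q ∧ G ∉ Q'.map CC) ∧ G.natDegree = d := by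
      rw [SetLike.le_def] at hcase
      push_neg at hcase
      obtain ⟨G, hGQ, hGn⟩ := hcase
      exact ⟨G.natDegree, G, ⟨hGQ, hGn⟩, rfl⟩
    set d0 := Nat.find hex with hd0
    obtain ⟨G₀, ⟨hG₀Q, hG₀n⟩, hG₀d⟩ := Nat.find_spec hex
    have hd0pos : 0 < d0 := by
      rcases Nat.eq_zero_or_pos d0 with h | h
      · exfalso
        apply hG₀n
        rw [Ideal.mem_map_C_iff]
        intro i
        rcases Nat.eq_zero_or_pos i with hi | hi
        · subst hi
          have : G₀ = Polynomial.C (G₀.coeff 0) :=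
            Polynomial.eq_C_of_natDegree_eq_zero (by omega)
          rw [← hCmem]
          show CC (G₀.coeff 0) ∈ Q
          rw [show CC (G₀.coeff 0) = Polynomial.C (G₀.coeff 0) from rfl, ← this]
          exact hG₀Q
        · have : G₀.coeff i = 0 := by
            apply Polynomial.coeff_eq_zero_of_natDegree_lt; omega
          rw [this]; exact Q'.zero_mem
      · exact h
    have hG₀deg : 0 < G₀.natDegree := by omega
    have hDQ' : G₀.leadingCoeff ∉ Q' := by
      intro hDQ
      have hG₀0 : G₀ ≠ 0 := by
        intro h
        rw [h] at hG₀deg; simp at hG₀deg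
      set G' := G₀.eraseLead with hG'
      have hG'Q : G' ∈ Q := by
        have hrepr : G' = G₀ - Polynomial.C G₀.leadingCoeff * Polynomial.X ^ G₀.natDegree :=
          eq_sub_of_add_eq (Polynomial.eraseLead_add_C_mul_X_pow G₀)
        rw [hrepr]
        refine Q.sub_mem hG₀Q (Ideal.mul_mem_right _ _ ?_)
        exact (hCmem _).mpr hDQ
      have hG'n : G' ∉ Q'.map CC := by
        intro hmem
        apply hG₀n
        rw [Ideal.mem_map_C_iff] at hmem ⊢
        intro i
        by_cases hi : i = G₀.natDegree
        · subst hi; exact hDQ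
        · have := hmem i
          rwa [Polynomial.eraseLead_coeff_of_ne i hi] at this
      have hG'd : G'.natDegree < d0 := by
        rcases Polynomial.eraseLead_natDegree_lt_or_eraseLead_eq_zero G₀ with h | h
        · rw [hG']; omega
        · rw [hG', h]; simpa using hd0pos
      exact Nat.find_min hex hG'd ⟨G', ⟨hG'Q, hG'n⟩, rfl⟩
    -- build the tower
    refine ⟨{
      m := t.m + 1
      F := fun k => if k ≤ t.m then CC (t.F k) else G₀
      p := fun k => if k ≤ t.m then (t.p k).map CC else Q
      p_prime := ?_
      p_le := ?_
      p_zero := ?_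
      p_last := ?_
      p_mono := ?_
      F_mem := ?_
      F_not_mem := ?_
      sat := ?_ }⟩
    · intro k _
      by_cases hk : k ≤ t.m
      · simpa [hk] using (Ideal.isPrime_map_C_iff_isPrime _).mpr (t.p_prime k hk)
      · simpa [hk] using hQ
    · intro k _
      by_cases hk : k ≤ t.m
      · simpa [hk] using hpkle k hk
      · simp [hk]
    · simp [t.p_zero, Ideal.map_bot]
    · simp
    · intro k hk
      by_cases hk1 : k + 1 ≤ t.m
      · have hk0 : k ≤ t.m := by omega
        simpa [hk0, hk1] using Ideal.map_mono (t.p_mono k (by omega))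
      · have hke : k = t.m := by omega
        subst hke
        rw [if_neg (by omega : ¬ t.m + 1 ≤ t.m), if_pos (le_refl t.m), t.p_last]
        exact hmaple
    · intro k hk
      by_cases hk1 : k + 1 ≤ t.m
      · simpa [hk1] using Ideal.mem_map_of_mem CC (t.F_mem k (by omega))
      · have hke : k = t.m := by omega
        subst hke
        simpa [hk1] using hG₀Q
    · intro k hk
      by_cases hk1 : k + 1 ≤ t.m
      · have hk0 : k ≤ t.m := by omega
        simpa [hk0, hk1] using hFnot k hk0 _ (t.F_not_mem k (by omega))
      · have hke : k = t.m := by omega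
        subst hke
        rw [if_neg (by omega : ¬ t.m + 1 ≤ t.m), if_pos (le_refl t.m), t.p_last]
        exact hG₀n
    · intro k hk z hz
      by_cases hk0 : k ≤ t.m
      · rw [if_pos hk0] at hz
        obtain ⟨s, hs, hmem⟩ := hsatk k hk0 z hz
        refine ⟨s, hs, ?_⟩
        refine Ideal.span_mono ?_ hmem
        rintro x ⟨j, hj, rfl⟩
        have hjm : j ≤ t.m := le_trans hj.2 hk0
        exact ⟨j, hj, by simp [hjm]⟩
      · have hke : k = t.m + 1 := by omega
        subst hke
        rw [if_neg hk0] at hz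
        obtain ⟨M, c, r, heq, hr⟩ := pseudo_div G₀ hG₀deg z
        have hrQ : r ∈ Q := by
          have : r = (Polynomial.C G₀.leadingCoeff) ^ M * z - c * G₀ := by
            rw [heq]; ring
          rw [this]
          exact Q.sub_mem (Ideal.mul_mem_left _ _ hz) (Ideal.mul_mem_left _ _ hG₀Q)
        have hrmap : r ∈ Q'.map CC := by
          by_contra hrn
          exact Nat.find_min hex (by omega) ⟨r, ⟨hrQ, hrn⟩, rfl⟩
        have hsat' : ∀ z' ∈ Q', ∃ s, s ∉ Q' ∧ s * z' ∈ Ideal.span (t.F '' Set.Icc 1 t.m) := by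
          intro z' hz'
          apply t.sat t.m le_rfl
          rw [t.p_last]; exact hz'
        obtain ⟨s, hs, hmem⟩ := sat_push hQ'p _ hsat' r hrmap
        refine ⟨Polynomial.C (s * G₀.leadingCoeff ^ M), ?_, ?_⟩
        · intro hc
          rw [hCmem] at hc
          rcases hQ'p.mem_or_mem hc with h | h
          · exact hs h
          · exact hDQ' (hQ'p.mem_of_pow_mem _ h)
        · have key : Polynomial.C (s * G₀.leadingCoeff ^ M) * z
              = (Polynomial.C s * c) * G₀ + Polynomial.C s * r := by
            have : Polynomial.C (s * G₀.leadingCoeff ^ M)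
                = Polynomial.C s * (Polynomial.C G₀.leadingCoeff) ^ M := by
              rw [← Polynomial.C_pow, ← Polynomial.C_mul]
            rw [this, mul_assoc, heq]; ring
          rw [key]
          refine Ideal.add_mem _ ?_ ?_
          · refine Ideal.mul_mem_left _ _ (Ideal.subset_span ?_)
            exact ⟨t.m + 1, ⟨by omega, le_rfl⟩, by simp⟩
          · refine Ideal.span_mono ?_ hmem
            rintro x ⟨y, ⟨j, hj, rfl⟩, rfl⟩
            obtain ⟨hj1, hj2⟩ := hj
            exact ⟨j, ⟨hj1, by omega⟩, by simp [hj2, hCC]⟩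
def Tower.ofBot {R : Type*} [CommRing R] [IsDomain R] : Tower (⊥ : Ideal R) where
  m := 0
  F := fun _ => 0
  p := fun _ => ⊥
  p_prime := fun _ _ => Ideal.bot_prime
  p_le := fun _ _ => le_rfl
  p_zero := rfl
  p_last := rfl
  p_mono := fun k hk => absurd hk (by omega)
  F_mem := fun k hk => absurd hk (by omega)
  F_not_mem := fun k hk => absurd hk (by omega)
  sat := fun k _ z hz => ⟨1, by simp, by simp [(Ideal.mem_bot).mp hz]⟩

theorem exists_tower : ∀ (N : ℕ) (q : Ideal (MvPolynomial (Fin N) ℂ)), q.IsPrime →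
    Nonempty (Tower q) := by
  intro N
  induction N with
  | zero =>
    intro q hq
    have hbot : q = ⊥ := by
      ext z
      simp only [Ideal.mem_bot]
      constructor
      · intro hz
        obtain ⟨c, rfl⟩ := MvPolynomial.C_surjective (Fin 0) z
        by_contra hne
        have hc : c ≠ 0 := fun h => hne (by rw [h, map_zero])
        have : IsUnit (MvPolynomial.C (σ := Fin 0) c) :=
          (isUnit_iff_ne_zero.mpr hc).map (MvPolynomial.C : ℂ →+* _)
        exact hq.ne_top (q.eq_top_of_isUnit_mem hz this)
      · rintro rfl; exact q.zero_mem
    subst hbot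
    exact ⟨Tower.ofBot⟩
  | succ N IH =>
    intro q hq
    set E := (MvPolynomial.finSuccEquiv ℂ N).toRingEquiv with hE
    set Q := q.map (E : MvPolynomial (Fin (N+1)) ℂ →+* Polynomial (MvPolynomial (Fin N) ℂ))
      with hQdef
    have hQp : Q.IsPrime := by
      rw [hQdef, q.map_comap_of_equiv E]
      exact hq.comap _
    have hQ'p : (Q.comap (Polynomial.C : MvPolynomial (Fin N) ℂ →+* _)).IsPrime :=
      hQp.comap _
    obtain ⟨t'⟩ := IH _ hQ'p
    obtain ⟨T⟩ := tower_polynomial Q hQp t'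
    have hback : Q.map (E.symm : Polynomial (MvPolynomial (Fin N) ℂ) →+* _) = q := by
      rw [hQdef, Ideal.map_comap_of_equiv, Ideal.map_comap_of_equiv]
      ext x
      simp
    exact ⟨hback ▸ T.mapEquiv E.symm⟩

namespace Division

variable {R : Type*} [CommRing R] {ι : Type*} [Fintype ι]

/-- single contraction of a 2-tensor -/
def ctr1 (μ : ι → ι → R) (ξ : ι → R) (j : ι) : R := ∑ i, ξ i * μ i j

/-- double contraction of a 2-tensor -/
def ctr2 (μ : ι → ι → R) (ξ ζ : ι → R) : R := ∑ j, ζ j * ctr1 μ ξ j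

variable {ω : ι → R} {μ : ι → ι → R} {P : Ideal R}

theorem ctrA (hcoc : ∀ i j k, ω i * μ j k - ω j * μ i k + ω k * μ i j ∈ P)
    (ξ : ι → R) (i j : ι) :
    (∑ a, ξ a * ω a) * μ i j - ω i * ctr1 μ ξ j + ω j * ctr1 μ ξ i ∈ P := by
  have he : (∑ a, ξ a * ω a) * μ i j - ω i * ctr1 μ ξ j + ω j * ctr1 μ ξ i
      = ∑ a, ξ a * (ω a * μ i j - ω i * μ a j + ω j * μ a i) := by
    simp only [ctr1, Finset.sum_mul, Finset.mul_sum, ← Finset.sum_sub_distrib,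
      ← Finset.sum_add_distrib]
    exact Finset.sum_congr rfl fun a _ => by ring
  rw [he]
  exact Ideal.sum_mem _ fun a _ => Ideal.mul_mem_left _ _ (hcoc a i j)

theorem ctrB (hcoc : ∀ i j k, ω i * μ j k - ω j * μ i k + ω k * μ i j ∈ P)
    (ξ ζ : ι → R) (j : ι) :
    (∑ a, ξ a * ω a) * ctr1 μ ζ j - (∑ a, ζ a * ω a) * ctr1 μ ξ j
      + ω j * ctr2 μ ξ ζ ∈ P := by
  obtain ⟨A0, hA⟩ : ∃ A0, A0 = ∑ a, ξ a * ω a := ⟨_, rfl⟩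
  obtain ⟨c, hc⟩ : ∃ c : ι → R, c = ctr1 μ ξ := ⟨_, rfl⟩
  have he : A0 * ctr1 μ ζ j - (∑ a, ζ a * ω a) * c j
      + ω j * ctr2 μ ξ ζ
      = ∑ b, ζ b * (A0 * μ b j - ω b * c j + ω j * c b) := by
    simp only [ctr2]
    simp only [← hc]
    simp only [ctr1, Finset.sum_mul, Finset.mul_sum, ← Finset.sum_sub_distrib,
      ← Finset.sum_add_distrib]
    exact Finset.sum_congr rfl fun a _ => by ring
  rw [← hA, ← hc, he]
  refine Ideal.sum_mem _ fun b _ => Ideal.mul_mem_left _ _ ?_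
  have h2 := ctrA hcoc ξ b j
  rw [← hA, ← hc] at h2
  exact h2

theorem ctrC (hcoc : ∀ i j k, ω i * μ j k - ω j * μ i k + ω k * μ i j ∈ P)
    (ξ ζ θ : ι → R) :
    (∑ a, ξ a * ω a) * ctr2 μ ζ θ - (∑ a, ζ a * ω a) * ctr2 μ ξ θ
      + (∑ a, θ a * ω a) * ctr2 μ ξ ζ ∈ P := by
  obtain ⟨A0, hA⟩ : ∃ A0, A0 = ∑ a, ξ a * ω a := ⟨_, rfl⟩
  obtain ⟨B0, hB⟩ : ∃ B0, B0 = ∑ a, ζ a * ω a := ⟨_, rfl⟩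
  obtain ⟨D0, hD⟩ : ∃ D0, D0 = ctr2 μ ξ ζ := ⟨_, rfl⟩
  obtain ⟨cξ, hcξ⟩ : ∃ c : ι → R, c = ctr1 μ ξ := ⟨_, rfl⟩
  obtain ⟨cζ, hcζ⟩ : ∃ c : ι → R, c = ctr1 μ ζ := ⟨_, rfl⟩
  have he : A0 * ctr2 μ ζ θ - B0 * ctr2 μ ξ θ
      + (∑ a, θ a * ω a) * D0
      = ∑ j, θ j * (A0 * cζ j - B0 * cξ j + ω j * D0) := by
    simp only [ctr2]
    simp only [← hcξ, ← hcζ]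
    simp only [Finset.sum_mul, Finset.mul_sum, ← Finset.sum_sub_distrib,
      ← Finset.sum_add_distrib]
    exact Finset.sum_congr rfl fun a _ => by ring
  rw [← hA, ← hB, ← hD, he]
  refine Ideal.sum_mem _ fun j _ => Ideal.mul_mem_left _ _ ?_
  have := ctrB hcoc ξ ζ j
  rw [← hA, ← hB, ← hD, ← hcξ, ← hcζ] at this
  exact this

/-- The key two-generator construction, mod a prime `P`. -/
theorem t2 [IsDomain R] (ω : ι → R) (ν : ι → ι → R) (P : Ideal R) (hP : P.IsPrime)
    (hcocP : ∀ i j k, ω i * ν j k - ω j * ν i k + ω k * ν i j ∈ P)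
    (u v : R) (ξ ζ : ι → R) (hu : ∑ i, ξ i * ω i = u) (hv : ∑ i, ζ i * ω i = v)
    (hPu : (P ⊔ Ideal.span {u}).IsPrime) (hunP : u ∉ P)
    (hvn : v ∉ P ⊔ Ideal.span {u})
    (hν2 : ctr2 ν ξ ζ ∈ (P ⊔ Ideal.span {u}) ⊔ Ideal.span {v}) :
    ∃ η : ι → R, ∀ i j, ν i j - (ω i * η j - ω j * η i) ∈ P := by
  -- decompose the double contraction
  obtain ⟨w, hw, y, hy, hct2⟩ := Submodule.mem_sup.mp hν2
  obtain ⟨p₀, hp₀, x, hx, hw'⟩ := Submodule.mem_sup.mp hw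
  obtain ⟨α, hα⟩ := Ideal.mem_span_singleton'.mp hx
  obtain ⟨β, hβ⟩ := Ideal.mem_span_singleton'.mp hy
  -- for each l, solve for t l
  have key : ∀ l, ctr1 ν ξ l - β * ω l ∈ P ⊔ Ideal.span {u} := by
    intro l
    have hb := ctrB hcocP ξ ζ l
    rw [hu, hv] at hb
    have hsub : v * (ctr1 ν ξ l - β * ω l)
        = u * ctr1 ν ζ l + ω l * (p₀ + α * u) - (u * ctr1 ν ζ l - v * ctr1 ν ξ l
            + ω l * ctr2 ν ξ ζ) := by
      have : ctr2 ν ξ ζ = p₀ + α * u + β * v := by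
        rw [← hct2, ← hw', hα, hβ]
      rw [this]; ring
    have hmem : v * (ctr1 ν ξ l - β * ω l) ∈ P ⊔ Ideal.span {u} := by
      rw [hsub]
      refine Submodule.sub_mem _ (Submodule.add_mem _ ?_ ?_) ?_
      · exact Ideal.mem_sup_right (Ideal.mem_span_singleton'.mpr ⟨ctr1 ν ζ l, by ring⟩)
      · rw [mul_add]
        refine Ideal.add_mem _ (Ideal.mem_sup_left (Ideal.mul_mem_left _ _ hp₀)) ?_
        exact Ideal.mem_sup_right (Ideal.mem_span_singleton'.mpr ⟨ω l * α, by ring⟩)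
      · exact Ideal.mem_sup_left hb
    rcases hPu.mem_or_mem hmem with h | h
    · exact absurd h hvn
    · exact h
  choose pp hpp t ht hkey using fun l => Submodule.mem_sup.mp (key l)
  -- hkey : pp l + t l = ctr1 ν ξ l - β * ω l, with ht : t l ∈ span {u}
  choose tt htt using fun l => Ideal.mem_span_singleton'.mp (ht l)
  refine ⟨tt, fun i j => ?_⟩
  have hD : u * (ν i j - (ω i * tt j - ω j * tt i)) ∈ P := by
    have hct1 : ∀ l, ctr1 ν ξ l = β * ω l + tt l * u + pp l := by
      intro l
      have h3 := hkey l
      rw [← htt l] at h3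
      linear_combination -h3
    have ha := ctrA hcocP ξ i j
    rw [hu] at ha
    have he : u * (ν i j - (ω i * tt j - ω j * tt i))
        = (u * ν i j - ω i * ctr1 ν ξ j + ω j * ctr1 ν ξ i) + (ω i * pp j - ω j * pp i) := by
      rw [hct1 i, hct1 j]; ring
    rw [he]
    exact Submodule.add_mem _ ha
      (Submodule.sub_mem _ (Ideal.mul_mem_left _ _ (hpp j)) (Ideal.mul_mem_left _ _ (hpp i)))
  rcases hP.mem_or_mem hD with h | h
  · exact absurd h hunP
  · exact h

/-- The main local division theorem. -/
theorem division [IsDomain R] (ω : ι → R) (μ : ι → ι → R)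
    (hcoc : ∀ i j k, ω i * μ j k - ω j * μ i k + ω k * μ i j = 0)
    (m : ℕ) (hm : 1 ≤ m) (f : ℕ → R) (P : ℕ → Ideal R)
    (hP : ∀ k ≤ m, (P k).IsPrime) (hP0 : P 0 = ⊥)
    (hPs : ∀ k < m, P (k + 1) = P k ⊔ Ideal.span {f (k + 1)})
    (hf : ∀ k, 1 ≤ k → k ≤ m → ∃ ξ : ι → R, ∑ i, ξ i * ω i = f k)
    (hnd : ∀ k < m, f (k + 1) ∉ P k)
    (hμ : ∀ i j, μ i j ∈ P m) :
    ∃ η : ι → R, ∀ i j, μ i j = ω i * η j - ω j * η i := by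
  have hcocP : ∀ (Q : Ideal R), ∀ i j k, ω i * μ j k - ω j * μ i k + ω k * μ i j ∈ Q := by
    intro Q i j k
    rw [hcoc i j k]; exact Q.zero_mem
  have hfm : ∀ k, 1 ≤ k → k ≤ m → f k ∈ P k := by
    intro k h1 h2
    obtain ⟨k, rfl⟩ : ∃ k', k' + 1 = k := ⟨k - 1, by omega⟩
    rw [hPs k (by omega)]
    exact Ideal.mem_sup_right (Ideal.subset_span rfl)
  rcases eq_or_lt_of_le hm with hm1 | hm2
  · -- m = 1 : the principal case
    have hm1 : m = 1 := hm1.symm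
    subst hm1
    obtain ⟨ξ, hξ⟩ := hf 1 le_rfl le_rfl
    have hP1 : P 1 = Ideal.span {f 1} := by
      rw [hPs 0 (by omega), hP0, bot_sup_eq]
    have hne : f 1 ≠ 0 := by
      have h := hnd 0 (by omega)
      rw [hP0] at h
      simpa using h
    have hct : ∀ l, ctr1 μ ξ l ∈ Ideal.span {f 1} := by
      intro l
      rw [← hP1]
      exact Ideal.sum_mem _ fun i _ => Ideal.mul_mem_left _ _ (hμ i l)
    choose t ht using fun l => Ideal.mem_span_singleton'.mp (hct l)
    refine ⟨t, fun i j => ?_⟩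
    have hA := Ideal.mem_bot.mp (ctrA (hcocP ⊥) ξ i j)
    rw [hξ] at hA
    have h0 : f 1 * (μ i j - (ω i * t j - ω j * t i)) = 0 := by
      have e : f 1 * (μ i j - (ω i * t j - ω j * t i)) =
          f 1 * μ i j - ω i * ctr1 μ ξ j + ω j * ctr1 μ ξ i := by
        rw [← ht i, ← ht j]; ring
      rw [e, hA]
    rcases mul_eq_zero.mp h0 with h | h
    · exact absurd h hne
    · exact sub_eq_zero.mp h
  · -- m ≥ 2
    have hm2' : 2 ≤ m := hm2
    set Claim : ℕ → Prop := fun k => ∃ η : ι → R,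
      ∀ i j, μ i j - (ω i * η j - ω j * η i) ∈ P k with hClaim
    have base : Claim (m - 2) := by
      obtain ⟨ξ, hξ⟩ := hf (m - 1) (by omega) (by omega)
      obtain ⟨ζ, hζ⟩ := hf m (by omega) le_rfl
      have e1 : P (m - 2) ⊔ Ideal.span {f (m - 1)} = P (m - 1) := by
        have h := hPs (m - 2) (by omega)
        rw [show m - 2 + 1 = m - 1 by omega] at h
        exact h.symm
      have e2 : (P (m - 2) ⊔ Ideal.span {f (m - 1)}) ⊔ Ideal.span {f m} = P m := by
        rw [e1]
        have h := hPs (m - 1) (by omega)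
        rw [show m - 1 + 1 = m by omega] at h
        exact h.symm
      have hξ' : ∑ i, ξ i * ω i = f (m - 1) := by
        rw [hξ]
      have hν2 : ctr2 μ ξ ζ ∈ (P (m - 2) ⊔ Ideal.span {f (m - 1)}) ⊔ Ideal.span {f m} := by
        rw [e2]
        exact Ideal.sum_mem _ fun j _ => Ideal.mul_mem_left _ _
          (Ideal.sum_mem _ fun i _ => Ideal.mul_mem_left _ _ (hμ i j))
      obtain ⟨η, hη⟩ := t2 ω μ (P (m - 2)) (hP _ (by omega)) (fun i j k => hcocP _ i j k)
        (f (m - 1)) (f m) ξ ζ hξ' hζ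
        (by rw [e1]; exact hP _ (by omega))
        (by have h := hnd (m - 2) (by omega); rwa [show m - 2 + 1 = m - 1 by omega] at h)
        (by rw [e1]; have h := hnd (m - 1) (by omega);
            rwa [show m - 1 + 1 = m by omega] at h)
        hν2
      exact ⟨η, hη⟩
    have step : ∀ k, k + 3 ≤ m → Claim (k + 1) → Claim k := by
      intro k hk3 hcl
      obtain ⟨η, hη⟩ := hcl
      have hdec : ∀ i j, ∃ pn : R × R, pn.1 ∈ P k ∧
          μ i j - (ω i * η j - ω j * η i) = pn.1 + pn.2 * f (k + 1) := by
        intro i j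
        have h := hη i j
        rw [hPs k (by omega)] at h
        obtain ⟨p, hp, y, hy, hpy⟩ := Submodule.mem_sup.mp h
        obtain ⟨c, hc⟩ := Ideal.mem_span_singleton'.mp hy
        exact ⟨(p, c), hp, by rw [← hpy, ← hc]⟩
      choose pn hpmem hpeq using hdec
      set pp : ι → ι → R := fun i j => (pn i j).1 with hppdef
      set nu : ι → ι → R := fun i j => (pn i j).2 with hnudef
      have hcnu : ∀ i j l, ω i * nu j l - ω j * nu i l + ω l * nu i j ∈ P k := by
        intro i j l
        have hD : ω i * (μ j l - (ω j * η l - ω l * η j))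
            - ω j * (μ i l - (ω i * η l - ω l * η i))
            + ω l * (μ i j - (ω i * η j - ω j * η i)) = 0 := by
          linear_combination hcoc i j l
        rw [hpeq i j, hpeq i l, hpeq j l] at hD
        have he : f (k + 1) * (ω i * nu j l - ω j * nu i l + ω l * nu i j)
            = -(ω i * pp j l - ω j * pp i l + ω l * pp i j) := by
          linear_combination hD
        have hmem : f (k + 1) * (ω i * nu j l - ω j * nu i l + ω l * nu i j) ∈ P k := by
          rw [he]
          refine Submodule.neg_mem _ ?_
          refine Submodule.add_mem _ (Submodule.sub_mem _ ?_ ?_) ?_ <;>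
            exact Ideal.mul_mem_left _ _ (hpmem _ _)
        rcases (hP k (by omega)).mem_or_mem hmem with h | h
        · exact absurd h (hnd k (by omega))
        · exact h
      obtain ⟨ξ, hξ⟩ := hf (k + 1) (by omega) (by omega)
      obtain ⟨ζ, hζ⟩ := hf (k + 2) (by omega) (by omega)
      obtain ⟨θ, hθ⟩ := hf (k + 3) (by omega) (by omega)
      have e1 : P k ⊔ Ideal.span {f (k + 1)} = P (k + 1) := (hPs k (by omega)).symm
      have e2 : (P k ⊔ Ideal.span {f (k + 1)}) ⊔ Ideal.span {f (k + 2)} = P (k + 2) := by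
        rw [e1]; exact (hPs (k + 1) (by omega)).symm
      have hPk2 : P (k + 1) ≤ P (k + 2) := by
        rw [hPs (k + 1) (by omega)]; exact le_sup_left
      have hPkk : P k ≤ P (k + 2) := le_trans (by rw [hPs k (by omega)]; exact le_sup_left) hPk2
      have hζ2 : ζ = ζ := rfl
      have hctr2 : ctr2 nu ξ ζ ∈ (P k ⊔ Ideal.span {f (k + 1)}) ⊔ Ideal.span {f (k + 2)} := by
        rw [e2]
        have hc := ctrC hcnu ξ ζ θ
        rw [hξ, hζ, hθ] at hc
        have hmem : f (k + 3) * ctr2 nu ξ ζ ∈ P (k + 2) := by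
          have hrw : f (k + 3) * ctr2 nu ξ ζ
              = (f (k + 1) * ctr2 nu ζ θ - f (k + 2) * ctr2 nu ξ θ
                  + f (k + 3) * ctr2 nu ξ ζ)
                - f (k + 1) * ctr2 nu ζ θ + f (k + 2) * ctr2 nu ξ θ := by ring
          rw [hrw]
          refine Submodule.add_mem _ (Submodule.sub_mem _ (hPkk hc) ?_) ?_
          · exact Ideal.mul_mem_right _ _ (hPk2 (hfm (k + 1) (by omega) (by omega)))
          · exact Ideal.mul_mem_right _ _ (hfm (k + 2) (by omega) (by omega))
        rcases (hP (k + 2) (by omega)).mem_or_mem hmem with h | h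
        · exact absurd h (hnd (k + 2) (by omega))
        · exact h
      obtain ⟨χ, hχ⟩ := t2 ω nu (P k) (hP k (by omega)) hcnu (f (k + 1)) (f (k + 2)) ξ ζ hξ hζ
        (by rw [e1]; exact hP _ (by omega)) (hnd k (by omega))
        (by rw [e1]; exact hnd (k + 1) (by omega)) hctr2
      refine ⟨fun l => η l + f (k + 1) * χ l, fun i j => ?_⟩
      have he : μ i j - (ω i * (η j + f (k + 1) * χ j) - ω j * (η i + f (k + 1) * χ i))
          = pp i j + f (k + 1) * (nu i j - (ω i * χ j - ω j * χ i)) := by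
        linear_combination hpeq i j
      rw [he]
      exact Submodule.add_mem _ (hpmem i j) (Ideal.mul_mem_left _ _ (hχ i j))
    have desc : ∀ d, d ≤ m - 2 → Claim (m - 2 - d) := by
      intro d
      induction d with
      | zero => intro _; simpa using base
      | succ d IH =>
        intro hd
        have hc := IH (by omega)
        have e : m - 2 - d = (m - 2 - (d + 1)) + 1 := by omega
        rw [e] at hc
        exact step _ (by omega) hc
    obtain ⟨η, hη⟩ := by
      have h := desc (m - 2) le_rfl
      rw [show m - 2 - (m - 2) = 0 by omega] at h
      exact h
    refine ⟨η, fun i j => ?_⟩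
    have h := hη i j
    rw [hP0, Ideal.mem_bot] at h
    exact sub_eq_zero.mp h

end Division


section Bridge

variable {n : ℕ}

/-- The key geometric input: at a minimal prime of `J(ω)` containing all the coefficients
of `dω`, the unfoldings ideal has an element outside the prime. -/
theorem hard_case (ω : Fin (n+1) → PolyS n) (hω : ω ≠ 0) (hint : Integrable ω)
    (hrad : (Jideal ω).IsRadical) {q : Ideal (PolyS n)}
    (hqmin : q ∈ (Jideal ω).minimalPrimes) (hC : Cdiff ω ≤ q) :
    ∃ f, f ∈ Iideal ω ∧ f ∉ q := by
  have hqp : q.IsPrime := hqmin.1.1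
  have hJq : Jideal ω ≤ q := hqmin.1.2
  haveI : q.IsPrime := hqp
  set R := Localization.AtPrime q with hR
  set φ := algebraMap (PolyS n) R with hφ
  have hinj : Function.Injective φ :=
    IsLocalization.injective _ q.primeCompl_le_nonZeroDivisors
  have memmap : ∀ (I : Ideal (PolyS n)) (z : PolyS n),
      φ z ∈ I.map φ ↔ ∃ s, s ∉ q ∧ s * z ∈ I := by
    intro I z
    constructor
    · intro h
      obtain ⟨⟨a, s⟩, hs⟩ := (IsLocalization.mem_map_algebraMap_iff q.primeCompl R).mp h
      refine ⟨s.1, s.2, ?_⟩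
      have : φ (s.1 * z) = φ a.1 := by
        rw [map_mul, mul_comm]
        exact hs
      rw [hinj this]
      exact a.2
    · rintro ⟨s, hs, hmem⟩
      exact (IsLocalization.mem_map_algebraMap_iff q.primeCompl R).mpr
        ⟨⟨⟨s * z, hmem⟩, ⟨s, hs⟩⟩, by rw [mul_comm (φ z)]; exact (map_mul φ s z).symm⟩
  have unitcancel : ∀ (I : Ideal R) (s z : PolyS n), s ∉ q → φ (s * z) ∈ I → φ z ∈ I := by
    intro I s z hs hmem
    obtain ⟨u, hu⟩ := IsLocalization.map_units (M := q.primeCompl) R ⟨s, hs⟩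
    have : φ z = (↑u⁻¹ : R) * φ (s * z) := by
      rw [map_mul, ← hu, ← mul_assoc, Units.inv_mul, one_mul]
    rw [this]
    exact I.mul_mem_left _ hmem
  have hJmap : (Jideal ω).map φ = q.map φ := by
    refine le_antisymm (Ideal.map_mono hJq) (Ideal.map_le_iff_le_comap.mpr ?_)
    intro z hz
    obtain ⟨s, hs, hsz⟩ := minimal_sat hqmin hrad hz
    exact Ideal.mem_comap.mpr ((memmap _ z).mpr ⟨s, hs, hsz⟩)
  -- the tower
  obtain ⟨t⟩ := exists_tower (n+1) q hqp
  have hchain : ∀ j k, j ≤ k → k ≤ t.m → t.p j ≤ t.p k := by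
    intro j k hjk hkm
    induction k with
    | zero => have : j = 0 := by omega
              subst this; exact le_rfl
    | succ k IH =>
      rcases Nat.lt_or_ge j (k+1) with h | h
      · exact le_trans (IH (by omega) (by omega)) (t.p_mono k (by omega))
      · have : j = k + 1 := by omega
        subst this; exact le_rfl
  have hFp : ∀ j, 1 ≤ j → j ≤ t.m → t.F j ∈ t.p j := by
    intro j h1 h2
    obtain ⟨j, rfl⟩ : ∃ j', j' + 1 = j := ⟨j - 1, by omega⟩
    exact t.F_mem j (by omega)
  have hm : 1 ≤ t.m := by
    by_contra h
    have hm0 : t.m = 0 := by omega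
    have : q = ⊥ := by rw [← t.p_last, hm0, t.p_zero]
    obtain ⟨i, hi⟩ : ∃ i, ω i ≠ 0 := by
      by_contra hc
      push_neg at hc
      exact hω (funext hc)
    have : ω i ∈ (⊥ : Ideal (PolyS n)) := by
      rw [← this]
      exact hJq (Ideal.subset_span (Set.mem_range_self i))
    exact hi (Ideal.mem_bot.mp this)
  set P : ℕ → Ideal R := fun k => (t.p k).map φ with hPdef
  set fR : ℕ → R := fun k => φ (t.F k) with hfRdef
  set ωR : Fin (n+1) → R := fun i => φ (ω i) with hωRdef
  set μR : Fin (n+1) → Fin (n+1) → R := fun i j => φ (dcoeff ω i j) with hμRdef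
  have hωspan : Ideal.span (Set.range ωR) = q.map φ := by
    rw [← hJmap]
    show Ideal.span (Set.range (φ ∘ ω)) = _
    rw [Set.range_comp, ← Ideal.map_span]
    rfl
  have hP : ∀ k ≤ t.m, (P k).IsPrime := by
    intro k hk
    refine IsLocalization.isPrime_of_isPrime_disjoint q.primeCompl R (t.p k)
      (t.p_prime k hk) ?_
    rw [Set.disjoint_left]
    intro s hsc hsp
    exact hsc (t.p_le k hk hsp)
  have hP0 : P 0 = ⊥ := by
    show (t.p 0).map φ = ⊥
    rw [t.p_zero, Ideal.map_bot]
  have hPs : ∀ k < t.m, P (k + 1) = P k ⊔ Ideal.span {fR (k + 1)} := by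
    intro k hk
    refine le_antisymm ?_ ?_
    · refine Ideal.map_le_iff_le_comap.mpr ?_
      intro z hz
      obtain ⟨s, hs, hmem⟩ := t.sat (k+1) (by omega) z hz
      refine Ideal.mem_comap.mpr ?_
      have hsz : φ (s * z) ∈ P k ⊔ Ideal.span {fR (k + 1)} := by
        have hle : Ideal.span (t.F '' Set.Icc 1 (k+1)) ≤
            Ideal.comap φ (P k ⊔ Ideal.span {fR (k + 1)}) := by
          rw [Ideal.span_le]
          rintro x ⟨j, ⟨hj1, hj2⟩, rfl⟩
          refine Ideal.mem_comap.mpr ?_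
          rcases Nat.lt_or_ge j (k+1) with h | h
          · refine Ideal.mem_sup_left ?_
            exact Ideal.mem_map_of_mem φ (hchain j k (by omega) (by omega) (hFp j hj1 (by omega)))
          · have : j = k + 1 := by omega
            subst this
            exact Ideal.mem_sup_right (Ideal.subset_span rfl)
        exact Ideal.mem_comap.mp (hle hmem)
      exact unitcancel _ s z hs hsz
    · refine sup_le (Ideal.map_mono (t.p_mono k hk)) ?_
      rw [Ideal.span_le]
      rintro x rfl
      exact Ideal.mem_map_of_mem φ (t.F_mem k hk)
  have hf : ∀ k, 1 ≤ k → k ≤ t.m → ∃ ξ : Fin (n+1) → R, ∑ i, ξ i * ωR i = fR k := by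
    intro k h1 h2
    have : fR k ∈ Ideal.span (Set.range ωR) := by
      rw [hωspan]
      exact Ideal.mem_map_of_mem φ (t.p_le k h2 (hFp k h1 h2))
    obtain ⟨c, hc⟩ := (Submodule.mem_span_range_iff_exists_fun R).mp this
    exact ⟨c, by simpa [smul_eq_mul] using hc⟩
  have hnd : ∀ k < t.m, fR (k + 1) ∉ P k := by
    intro k hk hmem
    obtain ⟨s, hs, hsz⟩ := (memmap _ _).mp hmem
    have hsp : s ∉ t.p k := fun h => hs (t.p_le k (by omega) h)
    rcases (t.p_prime k (by omega)).mem_or_mem hsz with h | h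
    · exact hsp h
    · exact t.F_not_mem k hk h
  have hμ : ∀ i j, μR i j ∈ P t.m := by
    intro i j
    show φ (dcoeff ω i j) ∈ (t.p t.m).map φ
    rw [t.p_last]
    exact Ideal.mem_map_of_mem φ (hC (Ideal.subset_span ⟨i, j, rfl⟩))
  have hcoc : ∀ i j k, ωR i * μR j k - ωR j * μR i k + ωR k * μR i j = 0 := by
    intro i j k
    have h := congrArg φ (hint i j k)
    simpa [map_sub, map_add, map_mul] using h
  obtain ⟨η, hη⟩ := Division.division ωR μR hcoc t.m hm fR P hP hP0 hPs hf hnd hμ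
  -- clear denominators
  obtain ⟨b, hb⟩ := IsLocalization.exist_integer_multiples_of_finite q.primeCompl η
  choose g hg using hb
  refine ⟨b.1, ⟨g, fun i j => ?_⟩, b.2⟩
  apply hinj
  have hgj : ∀ j, φ (g j) = φ b.1 * η j := by
    intro j
    rw [hg j]
    simp [Submonoid.smul_def, Algebra.smul_def, hφ]
  calc φ (b.1 * dcoeff ω i j) = φ b.1 * μR i j := by rw [map_mul]
    _ = φ b.1 * (ωR i * η j - ωR j * η i) := by rw [hη i j]
    _ = ωR i * (φ b.1 * η j) - ωR j * (φ b.1 * η i) := by ring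
    _ = ωR i * φ (g j) - ωR j * φ (g i) := by rw [hgj i, hgj j]
    _ = φ (ω i * g j - ω j * g i) := by rw [map_sub, map_mul, map_mul]

end Bridge

/-- If `ω ∈ ℱ¹(ℙⁿ,e)` and `J(ω)` is radical, then
`(J(ω) : I(ω)) = (J(ω) : K(ω)) = L(ω)`; in particular the annihilator `(J(ω) : I(ω))` of
`I(ω)/J(ω)` equals `L(ω)`, so the minimal primes of the support of `I(ω)/J(ω)` coincide with
the minimal primes over `L(ω)`. -/
theorem stmt5 (n e : ℕ) (ω : Fin (n+1) → PolyS n) (hfol : IsFoliation n e ω)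
    (hrad : (Jideal ω).IsRadical) :
    (Jideal ω).colon (Iideal ω) = Lideal ω ∧
    (Jideal ω).colon (Kideal ω) = Lideal ω ∧
    ((Jideal ω).colon (Iideal ω)).minimalPrimes = (Lideal ω).minimalPrimes := by
  obtain ⟨hω, _, _, hint, _, _⟩ := hfol
  -- `I(ω) ⊆ K(ω)`
  have hIK : Iideal ω ≤ Kideal ω := by
    intro h hh
    obtain ⟨η, hη⟩ : ∃ η : Fin (n+1) → PolyS n,
        ∀ i j, h * dcoeff ω i j = ω i * η j - ω j * η i := hh
    rw [Kideal, Submodule.mem_colon]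
    intro c hc
    rw [smul_eq_mul]
    refine Submodule.span_induction ?_ ?_ ?_ ?_ hc
    · rintro x ⟨i, j, rfl⟩
      rw [hη i j]
      refine Submodule.sub_mem _ ?_ ?_ <;>
        exact Ideal.mul_mem_right _ _ (Ideal.subset_span (Set.mem_range_self _))
    · rw [mul_zero]; exact (Jideal ω).zero_mem
    · intro x y _ _ hx hy
      rw [mul_add]; exact Ideal.add_mem _ hx hy
    · intro a x _ hx
      rw [smul_eq_mul, mul_left_comm]
      exact Ideal.mul_mem_left _ _ hx
  -- `L(ω) = (J(ω) : K(ω))`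
  have hLK : Lideal ω = (Jideal ω).colon (Kideal ω) := by
    refine le_antisymm ?_ ?_
    · refine iSup_le fun d => ?_
      intro h hh
      rw [Submodule.mem_colon] at hh ⊢
      intro k hk
      have h1 : h * k ^ (d + 1) ∈ Jideal ω := by
        have h2 := hh _ (Ideal.pow_mem_pow hk (d + 1))
        rwa [smul_eq_mul] at h2
      have h2 : (h * k) ^ (d + 1) ∈ Jideal ω := by
        have e : (h * k) ^ (d + 1) = h ^ d * (h * k ^ (d + 1)) := by ring
        rw [e]
        exact Ideal.mul_mem_left _ _ h1
      rw [smul_eq_mul]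
      exact hrad (Ideal.mem_radical_iff.mpr ⟨d + 1, h2⟩)
    · have hle := le_iSup (fun d => (Jideal ω).colon (Kideal ω ^ (d + 1) : Ideal (PolyS n))) 0
      simpa [pow_one, Lideal] using hle
  -- `J` is the intersection of its minimal primes
  have hJrad : sInf (Jideal ω).minimalPrimes = Jideal ω := by
    rw [Ideal.sInf_minimalPrimes]
    exact hrad.radical
  -- the main inclusion
  have hmain : (Jideal ω).colon (Iideal ω) ≤ (Jideal ω).colon (Kideal ω) := by
    intro h hh
    rw [Submodule.mem_colon] at hh ⊢
    intro k hk
    rw [smul_eq_mul, ← hJrad]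
    refine Ideal.mem_sInf.mpr ?_
    intro p hp
    have hqp : p.IsPrime := hp.1.1
    by_cases hCq : Cdiff ω ≤ p
    · obtain ⟨f, hfI, hfq⟩ := hard_case ω hω hint hrad hp hCq
      have hhf : h * f ∈ Jideal ω := by
        have h3 := hh f hfI
        rwa [smul_eq_mul] at h3
      have hhp : h ∈ p := by
        rcases hqp.mem_or_mem (hp.1.2 hhf) with h' | h'
        · exact h'
        · exact absurd h' hfq
      exact Ideal.mul_mem_right _ _ hhp
    · obtain ⟨c, hc, hcq⟩ := SetLike.not_le_iff_exists.mp hCq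
      have hkc : k * c ∈ Jideal ω := by
        have h3 := Submodule.mem_colon.mp hk c hc
        rwa [smul_eq_mul] at h3
      have hkp : k ∈ p := by
        rcases hqp.mem_or_mem (hp.1.2 hkc) with h' | h'
        · exact h'
        · exact absurd h' hcq
      exact Ideal.mul_mem_left _ _ hkp
  have hKI : (Jideal ω).colon (Kideal ω) ≤ (Jideal ω).colon (Iideal ω) := by
    intro h hh
    rw [Submodule.mem_colon] at hh ⊢
    exact fun p hp => hh p (hIK hp)
  have h1 : (Jideal ω).colon (Iideal ω) = (Jideal ω).colon (Kideal ω) :=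
    le_antisymm hmain hKI
  exact ⟨h1.trans hLK.symm, hLK.symm, by rw [h1.trans hLK.symm]⟩

end
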